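/- Let C ∈ ℂ^{n×n} be a nonzero positive semidefinite matrix. For each diagonal index i with C_{ii} ≠ 0, let C^{(1)}(i) = C − (1/C_{ii}) C e_i e_i^T C be the one-step pivoted Cholesky residual. Then the expected residual of one step of randomly pivoted Cholesky equals Φ(C): Σ_{i: C_{ii} ≠ 0} (C_{ii}/tr(C)) · C^{(1)}(i) = C − C²/tr(C). -/

import Mathlib

open Matrix Finset
open scoped ComplexOrder

lemma aux_sum_std {n : ℕ} : (∑ i : Fin n, Matrix.single i i (1 : ℂ)) = 1 := by
  ext a b
  rw [Matrix.sum_apply]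
  by_cases h : a = b
  · subst h; simp [Matrix.single, Matrix.one_apply]
  · simp only [Matrix.single, Matrix.one_apply, h, if_false, Matrix.of_apply]
    rw [Finset.sum_eq_zero]
    intro x _
    rw [if_neg]
    rintro ⟨rfl, rfl⟩; exact h rfl

theorem rpcholesky_expected_residual {n : ℕ} (C : Matrix (Fin n) (Fin n) ℂ)
    (hC : C.PosSemidef) (hC0 : C ≠ 0) :
    (∑ i ∈ Finset.univ.filter (fun i : Fin n => C i i ≠ 0),
        (C i i / Matrix.trace C) •
          (C - (C i i)⁻¹ • (C * Matrix.single i i (1 : ℂ) * C)))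
      = C - (Matrix.trace C)⁻¹ • (C * C) := by
  obtain ⟨B, hB⟩ : ∃ B : Matrix (Fin n) (Fin n) ℂ, C = Bᴴ * B := by
    open scoped MatrixOrder Matrix.Norms.L2Operator in
    obtain ⟨B, hB⟩ := CStarAlgebra.nonneg_iff_eq_star_mul_self.mp hC.nonneg
    exact ⟨B, hB⟩
  -- column vanishing when diagonal is zero
  have hdiag : ∀ i, C i i = ∑ k, Complex.normSq (B k i) := by
    intro i
    rw [hB]
    simp [Matrix.mul_apply, Matrix.conjTranspose_apply, Complex.mul_conj', Complex.normSq_eq_conj_mul_self]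
  have hcol : ∀ i, C i i = 0 → ∀ a, C a i = 0 := by
    intro i hi a
    have hz : ∀ k, B k i = 0 := by
      intro k
      have h0 : ∑ k, (Complex.normSq (B k i) : ℝ) = 0 := by
        have h1 := hi
        rw [hdiag i] at h1
        exact_mod_cast h1
      have := (Finset.sum_eq_zero_iff_of_nonneg (fun k _ => Complex.normSq_nonneg (B k i))).mp h0 k (Finset.mem_univ k)
      exact Complex.normSq_eq_zero.mp this
    rw [hB]
    simp [Matrix.mul_apply, hz]
  have hdnn : ∀ i, (0:ℝ) ≤ (C i i).re ∧ (C i i).im = 0 := by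
    intro i
    constructor
    · rw [hdiag i]; simp only [Complex.ofReal_re]; exact Finset.sum_nonneg fun k _ => Complex.normSq_nonneg _
    · rw [hdiag i]; simp
  have ht : Matrix.trace C ≠ 0 := by
    intro h
    apply hC0
    have hre : ∑ i, (C i i).re = 0 := by
      have := congrArg Complex.re h
      simpa [Matrix.trace, Matrix.diag, Complex.re_sum] using this
    have hdz : ∀ i, C i i = 0 := by
      intro i
      have := (Finset.sum_eq_zero_iff_of_nonneg (fun i _ => (hdnn i).1)).mp hre i (Finset.mem_univ i)
      exact Complex.ext this (hdnn i).2
    ext a b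
    have := hcol b (hdz b) a
    simpa using this
  have hM0 : ∀ i, C i i = 0 → C * Matrix.single i i (1:ℂ) * C = 0 := by
    intro i hi
    ext a b
    simp [Matrix.mul_apply, Matrix.single, ite_and, hcol i hi]
  have step : ∀ i ∈ Finset.univ.filter (fun i : Fin n => C i i ≠ 0),
      (C i i / Matrix.trace C) • (C - (C i i)⁻¹ • (C * Matrix.single i i (1:ℂ) * C))
        = (C i i / Matrix.trace C) • C
          - (Matrix.trace C)⁻¹ • (C * Matrix.single i i (1:ℂ) * C) := by
    intro i hi
    rw [Finset.mem_filter] at hi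
    rw [smul_sub, smul_smul, div_mul_eq_mul_div, mul_inv_cancel₀ hi.2, one_div]
  rw [Finset.sum_congr rfl step, Finset.sum_sub_distrib]
  have h1 : (∑ i ∈ Finset.univ.filter (fun i : Fin n => C i i ≠ 0),
      (C i i / Matrix.trace C) • C) = C := by
    rw [← Finset.sum_smul]
    have : (∑ i ∈ Finset.univ.filter (fun i : Fin n => C i i ≠ 0), C i i / Matrix.trace C)
        = (∑ i ∈ Finset.univ.filter (fun i : Fin n => C i i ≠ 0), C i i) / Matrix.trace C := by
      rw [Finset.sum_div]
    rw [this, Finset.sum_filter_ne_zero]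
    rw [show (∑ i, C i i) = Matrix.trace C from rfl, div_self ht, one_smul]
  have h2 : (∑ i ∈ Finset.univ.filter (fun i : Fin n => C i i ≠ 0),
      (Matrix.trace C)⁻¹ • (C * Matrix.single i i (1:ℂ) * C))
      = (Matrix.trace C)⁻¹ • (C * C) := by
    rw [← Finset.smul_sum]
    congr 1
    rw [Finset.sum_filter_of_ne (p := fun i => C i i ≠ 0)]
    · rw [← Finset.sum_mul, ← Finset.mul_sum, aux_sum_std, mul_one]
    · intro i _ hne hi
      exact hne (hM0 i hi)
  rw [h1, h2]
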